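/- Let $R$ be an irreducible simply-laced root system, $\alpha$ a simple root such that $\varpi_\alpha$ is minuscule, and $I = S \setminus \{\alpha\}$. Then the parabolic Weyl group $W_I$ acts transitively on the set $R^+ \setminus R^+_I$ of positive roots not supported on $I$. -/

import Mathlib

open scoped RealInnerProductSpace

noncomputable section

variable {V : Type} [NormedAddCommGroup V] [InnerProductSpace ℝ V]

/-- The reflection of `V` in the hyperplane orthogonal to `α`
(the identity map when `α = 0`). -/
def reflVec (α : V) : V ≃ₗ[ℝ] V where
  toFun x := x - (2 * ⟪x, α⟫ / ⟪α, α⟫) • α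
  invFun x := x - (2 * ⟪x, α⟫ / ⟪α, α⟫) • α
  map_add' x y := by
    try dsimp only
    have h : 2 * ⟪x + y, α⟫ / ⟪α, α⟫ = 2 * ⟪x, α⟫ / ⟪α, α⟫ + 2 * ⟪y, α⟫ / ⟪α, α⟫ := by
      rw [inner_add_left]; ring
    rw [h, add_smul]; abel
  map_smul' r x := by
    try dsimp only
    have h : 2 * ⟪r • x, α⟫ / ⟪α, α⟫ = r * (2 * ⟪x, α⟫ / ⟪α, α⟫) := by
      rw [real_inner_smul_left]; ring
    try simp only [RingHom.id_apply]
    rw [h, mul_smul, smul_sub]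
  left_inv x := by
    dsimp only
    by_cases h : (⟪α, α⟫ : ℝ) = 0
    · simp [inner_self_eq_zero.mp h]
    · have h2 : 2 * ⟪x - (2 * ⟪x, α⟫ / ⟪α, α⟫) • α, α⟫ / ⟪α, α⟫
          = -(2 * ⟪x, α⟫ / ⟪α, α⟫) := by
        rw [inner_sub_left, real_inner_smul_left]
        field_simp
        ring
      rw [h2, neg_smul, sub_neg_eq_add, sub_add_cancel]
  right_inv x := by
    dsimp only
    by_cases h : (⟪α, α⟫ : ℝ) = 0
    · simp [inner_self_eq_zero.mp h]
    · have h2 : 2 * ⟪x - (2 * ⟪x, α⟫ / ⟪α, α⟫) • α, α⟫ / ⟪α, α⟫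
          = -(2 * ⟪x, α⟫ / ⟪α, α⟫) := by
        rw [inner_sub_left, real_inner_smul_left]
        field_simp
        ring
      rw [h2, neg_smul, sub_neg_eq_add, sub_add_cancel]

/-- The pairing `⟨x, y^∨⟩ = 2(x,y)/(y,y)` of a vector with the coroot of `y`. -/
def cpair (x y : V) : ℝ := 2 * ⟪x, y⟫ / ⟪y, y⟫

/-- A (reduced, crystallographic) root system in a real inner product space,
together with a chosen system of simple roots. -/
structure RootSystemData (V : Type) [NormedAddCommGroup V] [InnerProductSpace ℝ V] where
  roots : Finset V
  simples : Finset V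
  simples_subset : simples ⊆ roots
  root_ne_zero : ∀ α ∈ roots, α ≠ 0
  pairing_int : ∀ α ∈ roots, ∀ β ∈ roots, ∃ n : ℤ, (n : ℝ) = cpair α β
  reflect_mem : ∀ α ∈ roots, ∀ β ∈ roots, reflVec α β ∈ roots
  reduced : ∀ α ∈ roots, ∀ t : ℝ, t • α ∈ roots → t = 1 ∨ t = -1
  simples_indep : LinearIndependent ℝ (fun a : {x // x ∈ simples} => (a : V))
  root_pos_or_neg : ∀ β ∈ roots,
    (∃ c : V → ℕ, β = ∑ α ∈ simples, (c α : ℝ) • α) ∨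
    (∃ c : V → ℕ, -β = ∑ α ∈ simples, (c α : ℝ) • α)

namespace RootSystemData

/-- `v` is a non-negative integer combination of the elements of `I`. -/
def IsPosCombOf (P : RootSystemData V) (I : Finset V) (v : V) : Prop :=
  ∃ c : V → ℕ, v = ∑ α ∈ I, (c α : ℝ) • α

/-- `v` is a non-negative integer combination of the simple roots. -/
def IsPosComb (P : RootSystemData V) (v : V) : Prop := P.IsPosCombOf P.simples v

/-- The set of positive roots. -/
def Pos (P : RootSystemData V) : Set V := {β | β ∈ P.roots ∧ P.IsPosComb β}

/-- The set of negative roots. -/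
def Neg (P : RootSystemData V) : Set V := {β | -β ∈ P.Pos}

/-- The positive roots lying in the root subsystem generated by `I`. -/
def PosOf (P : RootSystemData V) (I : Finset V) : Set V := {β | β ∈ P.roots ∧ P.IsPosCombOf I β}

/-- The half sum of the positive roots. -/
def rho (P : RootSystemData V) : V := (2 : ℝ)⁻¹ • ∑ᶠ β ∈ P.Pos, β

/-- The half sum of the positive roots in the root subsystem generated by `I`. -/
def rhoOf (P : RootSystemData V) (I : Finset V) : V := (2 : ℝ)⁻¹ • ∑ᶠ β ∈ P.PosOf I, β

/-- The parabolic subgroup of the Weyl group generated by the reflections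
in the elements of `I`. -/
def WeylOf (P : RootSystemData V) (I : Finset V) : Subgroup (V ≃ₗ[ℝ] V) :=
  Subgroup.closure (reflVec '' (I : Set V))

/-- The Weyl group, generated by the simple reflections. -/
def Weyl (P : RootSystemData V) : Subgroup (V ≃ₗ[ℝ] V) := P.WeylOf P.simples

/-- `l` is a word with letters in `I` whose associated product of reflections is `w`. -/
def IsWordOf (P : RootSystemData V) (I : Finset V) (l : List V) (w : V ≃ₗ[ℝ] V) : Prop :=
  (∀ α ∈ l, α ∈ I) ∧ (l.map reflVec).prod = w

/-- The length of `w` with respect to the reflections in the elements of `I`. -/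
def lengthOf (P : RootSystemData V) (I : Finset V) (w : V ≃ₗ[ℝ] V) : ℕ :=
  sInf {n | ∃ l, P.IsWordOf I l w ∧ l.length = n}

/-- The Coxeter length of `w` with respect to the simple reflections. -/
def length (P : RootSystemData V) (w : V ≃ₗ[ℝ] V) : ℕ := P.lengthOf P.simples w

/-- `l` is a reduced decomposition of `w` into simple reflections. -/
def IsReducedWord (P : RootSystemData V) (l : List V) (w : V ≃ₗ[ℝ] V) : Prop :=
  P.IsWordOf P.simples l w ∧ l.length = P.length w

/-- The partial order on the root lattice: `x ≤ y` iff `y - x` is a non-negative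
integer combination of simple roots. -/
def rootLE (P : RootSystemData V) (x y : V) : Prop := P.IsPosComb (y - x)

/-- The root system is simply laced: all roots have the same length. -/
def SimplyLaced (P : RootSystemData V) : Prop := ∀ α ∈ P.roots, ∀ β ∈ P.roots, ⟪α, α⟫ = ⟪β, β⟫

/-- The root system is irreducible: it admits no decomposition into two
non-empty mutually orthogonal parts. -/
def Irred (P : RootSystemData V) : Prop :=
  ∀ A B : Set V, (P.roots : Set V) ⊆ A ∪ B →
    (∀ a ∈ A ∩ (P.roots : Set V), ∀ b ∈ B ∩ (P.roots : Set V), ⟪a, b⟫ = 0) →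
    A ∩ (P.roots : Set V) = ∅ ∨ B ∩ (P.roots : Set V) = ∅

/-- `ϖ` is the fundamental weight associated with the simple root `α`. -/
def IsFundamentalWeight (P : RootSystemData V) (α ϖ : V) : Prop :=
  cpair ϖ α = 1 ∧ ∀ γ ∈ P.simples, γ ≠ α → cpair ϖ γ = 0

/-- The weight `ϖ` is minuscule: it pairs with every positive coroot by at most `1`. -/
def IsMinusculeWeight (P : RootSystemData V) (ϖ : V) : Prop := ∀ β ∈ P.Pos, cpair ϖ β ≤ 1

/-- The support of `w`: the set of simple roots whose reflections occur in a
reduced decomposition of `w`. -/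
def Supp (P : RootSystemData V) (w : V ≃ₗ[ℝ] V) : Set V :=
  {δ | δ ∈ P.simples ∧ ∃ l, P.IsReducedWord l w ∧ δ ∈ l}

end RootSystemData


section Aux

variable {V : Type} [NormedAddCommGroup V] [InnerProductSpace ℝ V]

lemma reflVec_apply' (mu x : V) : reflVec mu x = x - cpair x mu • mu := rfl

namespace RootSystemData

lemma coeff_unique (P : RootSystemData V) (f g : V → ℝ)
    (h : ∑ δ ∈ P.simples, f δ • δ = ∑ δ ∈ P.simples, g δ • δ) :
    ∀ δ ∈ P.simples, f δ = g δ := by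
  have key : ∑ δ ∈ P.simples, (fun δ => (f δ - g δ) • δ) δ = 0 := by
    simp only [sub_smul, Finset.sum_sub_distrib, h, sub_self]
  have h0 : ∑ i : {x // x ∈ P.simples}, (f i - g i) • (i : V) = 0 := by
    rw [Finset.sum_coe_sort P.simples (fun δ => (f δ - g δ) • δ)]; exact key
  intro δ hδ
  have := Fintype.linearIndependent_iff.mp P.simples_indep (fun i => f i - g i) h0 ⟨δ, hδ⟩
  simpa [sub_eq_zero] using this

lemma root_inner_self_pos (P : RootSystemData V) {β : V} (hβ : β ∈ P.roots) :
    0 < ⟪β, β⟫ := by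
  have h1 : ⟪β, β⟫ ≠ 0 := fun h => P.root_ne_zero β hβ (inner_self_eq_zero.mp h)
  exact lt_of_le_of_ne real_inner_self_nonneg (Ne.symm h1)

lemma cpair_vals (P : RootSystemData V) (hSL : P.SimplyLaced) {β γ : V}
    (hβ : β ∈ P.roots) (hγ : γ ∈ P.roots) (h1 : β ≠ γ) (h2 : β ≠ -γ) :
    cpair β γ = -1 ∨ cpair β γ = 0 ∨ cpair β γ = 1 := by
  obtain ⟨n, hn⟩ := P.pairing_int β hβ γ hγ
  have hgg := P.root_inner_self_pos hγ
  have hbb := P.root_inner_self_pos hβ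
  have hlen : ⟪β, β⟫ = ⟪γ, γ⟫ := hSL β hβ γ hγ
  have hn' : (n : ℝ) = 2 * ⟪β, γ⟫ / ⟪γ, γ⟫ := hn
  have hbg : ⟪β, γ⟫ = (n : ℝ) * ⟪γ, γ⟫ / 2 := by
    field_simp at hn' ⊢; linarith
  have hcs : ⟪β, γ⟫ * ⟪β, γ⟫ ≤ ⟪γ, γ⟫ * ⟪γ, γ⟫ := by
    have := real_inner_mul_inner_self_le β γ
    nlinarith
  have hcs' : ((n : ℝ) * ⟪γ, γ⟫ / 2) * ((n : ℝ) * ⟪γ, γ⟫ / 2) ≤ ⟪γ, γ⟫ * ⟪γ, γ⟫ := by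
    rw [← hbg]; exact hcs
  have hn2 : (n : ℝ) * n ≤ 4 := by nlinarith [mul_pos hgg hgg, hcs']
  have hnorm : ‖β‖ = ‖γ‖ := by
    have hb := real_inner_self_eq_norm_mul_norm β
    have hg := real_inner_self_eq_norm_mul_norm γ
    nlinarith [norm_nonneg β, norm_nonneg γ]
  have hnz : ‖γ‖ ≠ 0 := by
    simpa using P.root_ne_zero γ hγ
  have hub : n ≤ 2 := by
    have h' : (n : ℝ) ≤ 2 := by nlinarith [sq_nonneg ((n : ℝ) - 2), sq_nonneg ((n : ℝ) + 2)]
    exact_mod_cast h'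
  have hlb : (-2 : ℤ) ≤ n := by
    have h' : (-2 : ℝ) ≤ (n : ℝ) := by
      nlinarith [sq_nonneg ((n : ℝ) - 2), sq_nonneg ((n : ℝ) + 2)]
    exact_mod_cast h'
  interval_cases n
  · -- n = -2 : β = -γ, contradiction
    exfalso
    apply h2
    have heq : ⟪β, -γ⟫ = ‖β‖ * ‖-γ‖ := by
      rw [inner_neg_right, norm_neg, hnorm]
      rw [real_inner_self_eq_norm_mul_norm] at hbg
      push_cast at hbg
      linarith
    have h3 := inner_eq_norm_mul_iff_real.mp heq
    rw [norm_neg, hnorm] at h3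
    exact smul_right_injective V hnz h3
  · left; rw [← hn]; norm_num
  · right; left; rw [← hn]; norm_num
  · right; right; rw [← hn]; norm_num
  · -- n = 2 : β = γ, contradiction
    exfalso
    apply h1
    have heq : ⟪β, γ⟫ = ‖β‖ * ‖γ‖ := by
      rw [hnorm, ← real_inner_self_eq_norm_mul_norm]
      push_cast at hbg
      linarith
    have h3 := inner_eq_norm_mul_iff_real.mp heq
    rw [hnorm] at h3
    exact smul_right_injective V hnz h3

lemma pos_comb_of_root' (P : RootSystemData V) {β : V} (hβ : β ∈ P.roots) (f : V → ℝ)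
    (hf : β = ∑ δ ∈ P.simples, f δ • δ) (hpos : ∃ δ ∈ P.simples, 0 < f δ) :
    ∃ d : V → ℕ, β = ∑ δ ∈ P.simples, (d δ : ℝ) • δ ∧ ∀ δ ∈ P.simples, (d δ : ℝ) = f δ := by
  rcases P.root_pos_or_neg β hβ with ⟨d, hd⟩ | ⟨d, hd⟩
  · exact ⟨d, hd, fun δ hδ => P.coeff_unique _ _ (hd.symm.trans hf) δ hδ⟩
  · exfalso
    have hsum : ∑ δ ∈ P.simples, (-(d δ : ℝ)) • δ = ∑ δ ∈ P.simples, f δ • δ := by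
      have hneg : ∑ δ ∈ P.simples, (-(d δ : ℝ)) • δ = -∑ δ ∈ P.simples, (d δ : ℝ) • δ := by
        simp [neg_smul]
      rw [← hf, hneg, ← hd, neg_neg]
    have hval := P.coeff_unique _ _ hsum
    obtain ⟨δ, hδ, hfδ⟩ := hpos
    have h1 := hval δ hδ
    have h2 : (0 : ℝ) ≤ (d δ : ℝ) := by positivity
    linarith

lemma not_posOf [DecidableEq V] (P : RootSystemData V) {α β : V} (hα : α ∈ P.simples)
    (c : V → ℕ) (hc : β = ∑ δ ∈ P.simples, (c δ : ℝ) • δ) (hcα : c α ≠ 0) :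
    β ∉ P.PosOf (P.simples.erase α) := by
  rintro ⟨-, e, he⟩
  have he' : β = ∑ δ ∈ P.simples, (if δ = α then (0 : ℝ) else (e δ : ℝ)) • δ := by
    rw [he, ← Finset.sum_erase_add _ _ hα, if_pos rfl, zero_smul, add_zero]
    exact Finset.sum_congr rfl fun δ hδ => by rw [if_neg (Finset.mem_erase.mp hδ).1]
  have h1 := P.coeff_unique (fun δ => (c δ : ℝ))
    (fun δ => if δ = α then (0 : ℝ) else (e δ : ℝ)) (hc.symm.trans he') α hα
  simp only [if_pos rfl] at h1
  exact hcα (by exact_mod_cast h1)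

lemma posOf_of_zero [DecidableEq V] (P : RootSystemData V) {α β : V} (hα : α ∈ P.simples)
    (hβ : β ∈ P.roots) (c : V → ℕ) (hc : β = ∑ δ ∈ P.simples, (c δ : ℝ) • δ) (h0 : c α = 0) :
    β ∈ P.PosOf (P.simples.erase α) := by
  refine ⟨hβ, c, ?_⟩
  rw [hc, ← Finset.sum_erase_add _ _ hα, h0]
  simp

lemma cpair_weight (P : RootSystemData V) (hSL : P.SimplyLaced) {α ϖ : V}
    (hα : α ∈ P.simples) (hfw : P.IsFundamentalWeight α ϖ) {β : V} (hβ : β ∈ P.roots)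
    (c : V → ℕ) (hc : β = ∑ δ ∈ P.simples, (c δ : ℝ) • δ) :
    cpair ϖ β = c α := by
  classical
  have hαroot : α ∈ P.roots := P.simples_subset hα
  have haa := P.root_inner_self_pos hαroot
  have hlen : ⟪β, β⟫ = ⟪α, α⟫ := hSL β hβ α hαroot
  have hinner : ⟪ϖ, β⟫ = (c α : ℝ) * ⟪ϖ, α⟫ := by
    rw [hc, inner_sum, ← Finset.sum_erase_add _ _ hα]
    have hz : ∀ δ ∈ P.simples.erase α, ⟪ϖ, (c δ : ℝ) • δ⟫ = 0 := by
      intro δ hδ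
      obtain ⟨hδα, hδS⟩ := Finset.mem_erase.mp hδ
      have hδroot : δ ∈ P.roots := P.simples_subset hδS
      have hdd := P.root_inner_self_pos hδroot
      have h0 : 2 * ⟪ϖ, δ⟫ / ⟪δ, δ⟫ = 0 := hfw.2 δ hδS hδα
      have hio : ⟪ϖ, δ⟫ = 0 := by
        rcases div_eq_zero_iff.mp h0 with h | h
        · linarith
        · exact absurd h (ne_of_gt hdd)
      rw [real_inner_smul_right, hio, mul_zero]
    rw [Finset.sum_eq_zero hz, zero_add, real_inner_smul_right]
  have h1 : (2 : ℝ) * ⟪ϖ, α⟫ / ⟪α, α⟫ = 1 := hfw.1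
  have h2 : (2 : ℝ) * ⟪ϖ, α⟫ = ⟪α, α⟫ := by
    field_simp at h1
    linarith
  show 2 * ⟪ϖ, β⟫ / ⟪β, β⟫ = (c α : ℝ)
  rw [hinner, hlen]
  rw [show (2 : ℝ) * ((c α : ℝ) * ⟪ϖ, α⟫) = (c α : ℝ) * (2 * ⟪ϖ, α⟫) by ring, h2]
  field_simp

lemma to_alpha [DecidableEq V] (P : RootSystemData V) (hSL : P.SimplyLaced)
    (α : V) (hα : α ∈ P.simples) (ϖ : V) (hfw : P.IsFundamentalWeight α ϖ)
    (hminu : P.IsMinusculeWeight ϖ) :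
    ∀ n : ℕ, ∀ β, β ∈ P.Pos → β ∉ P.PosOf (P.simples.erase α) →
      ∀ c : V → ℕ, β = ∑ δ ∈ P.simples, (c δ : ℝ) • δ → (∑ δ ∈ P.simples, c δ) = n →
      ∃ u ∈ P.WeylOf (P.simples.erase α), u β = α := by
  intro n
  induction n using Nat.strong_induction_on with
  | _ n IH =>
  intro β hβpos hβnot c hc hn
  have hβroot : β ∈ P.roots := hβpos.1
  have hαroot : α ∈ P.roots := P.simples_subset hα
  have haa := P.root_inner_self_pos hαroot
  have hbb := P.root_inner_self_pos hβroot
  -- Step A : c α = 1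
  have hcα0 : c α ≠ 0 := fun h => hβnot (P.posOf_of_zero hα hβroot c hc h)
  have hw : cpair ϖ β = c α := P.cpair_weight hSL hα hfw hβroot c hc
  have hle : cpair ϖ β ≤ 1 := hminu β hβpos
  have hcα : c α = 1 := by
    have h1 : (c α : ℝ) ≤ 1 := by rw [← hw]; exact hle
    have h2 : c α ≤ 1 := by exact_mod_cast h1
    omega
  by_cases hβα : β = α
  · exact ⟨1, one_mem _, by rw [hβα]; rfl⟩
  -- Step C : find μ ∈ I with ⟪β, μ⟫ > 0
  have hex : ∃ μ ∈ P.simples.erase α, 0 < ⟪β, μ⟫ := by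
    by_contra hcon
    push_neg at hcon
    have hsum : ⟪β, β⟫ = ∑ δ ∈ P.simples, (c δ : ℝ) * ⟪β, δ⟫ := by
      nth_rewrite 2 [hc]
      rw [inner_sum]
      exact Finset.sum_congr rfl fun δ _ => real_inner_smul_right _ _ _
    have hIneg : ∑ δ ∈ P.simples.erase α, (c δ : ℝ) * ⟪β, δ⟫ ≤ 0 :=
      Finset.sum_nonpos fun μ hμ =>
        mul_nonpos_of_nonneg_of_nonpos (by positivity) (hcon μ hμ)
    have hsplit : ∑ δ ∈ P.simples.erase α, (c δ : ℝ) * ⟪β, δ⟫ + (c α : ℝ) * ⟪β, α⟫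
        = ∑ δ ∈ P.simples, (c δ : ℝ) * ⟪β, δ⟫ :=
      Finset.sum_erase_add _ _ hα
    have hba : 0 < ⟪β, α⟫ := by
      rw [hcα] at hsplit
      push_cast at hsplit
      nlinarith
    have hβnegα : β ≠ -α := by
      intro h
      rw [h, inner_neg_left] at hba
      linarith
    have hcpa : cpair β α = 1 := by
      have hpos : 0 < cpair β α := div_pos (by linarith) haa
      rcases P.cpair_vals hSL hβroot hαroot hβα hβnegα with h | h | h
      · linarith
      · linarith
      · exact h
    have hγroot : β - α ∈ P.roots := by
      have := P.reflect_mem α hαroot β hβroot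
      rwa [reflVec_apply', hcpa, one_smul] at this
    have hγcomb : β - α = ∑ δ ∈ P.simples.erase α, (c δ : ℝ) • δ := by
      rw [hc, ← Finset.sum_erase_add _ _ hα, hcα]
      push_cast
      rw [one_smul]
      abel
    have hβγ : ⟪β, β - α⟫ ≤ 0 := by
      rw [hγcomb, inner_sum]
      exact Finset.sum_nonpos fun μ hμ => by
        rw [real_inner_smul_right]
        exact mul_nonpos_of_nonneg_of_nonpos (by positivity) (hcon μ hμ)
    have hggpos := P.root_inner_self_pos hγroot
    have hαγ1 : α ≠ β - α := by
      intro h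
      have hβ2α : β = (2 : ℝ) • α := by
        rw [sub_eq_iff_eq_add.mp h.symm, two_smul]
      have := P.reduced α hαroot 2 (hβ2α ▸ hβroot)
      rcases this with h' | h' <;> norm_num at h'
    have hαγ2 : α ≠ -(β - α) := by
      intro h
      rw [neg_sub] at h
      exact P.root_ne_zero β hβroot (sub_eq_self.mp h.symm)
    have hcp1 := P.cpair_vals hSL hαroot hγroot hαγ1 hαγ2
    have hdecomp : cpair β (β - α) = 2 + cpair α (β - α) := by
      show 2 * ⟪β, β - α⟫ / ⟪β - α, β - α⟫ = 2 + 2 * ⟪α, β - α⟫ / ⟪β - α, β - α⟫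
      have hβeq : ⟪β, β - α⟫ = ⟪β - α, β - α⟫ + ⟪α, β - α⟫ := by
        rw [← inner_add_left]
        congr 1
        abel
      rw [hβeq]
      field_simp
    have hpos2 : 0 < 2 * ⟪β, β - α⟫ / ⟪β - α, β - α⟫ := by
      show (0 : ℝ) < cpair β (β - α)
      rcases hcp1 with h | h | h <;> rw [hdecomp, h] <;> norm_num
    rcases div_pos_iff.mp hpos2 with ⟨h1', -⟩ | ⟨-, h2'⟩
    · linarith
    · linarith
  obtain ⟨μ, hμI, hβμ⟩ := hex
  obtain ⟨hμα, hμS⟩ := Finset.mem_erase.mp hμI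
  have hμroot : μ ∈ P.roots := P.simples_subset hμS
  have hmm := P.root_inner_self_pos hμroot
  -- β ≠ μ and β ≠ -μ
  have hβμne : β ≠ μ := by
    intro h
    apply hβnot
    refine ⟨hβroot, fun δ => if δ = μ then 1 else 0, ?_⟩
    rw [h, Finset.sum_eq_single_of_mem μ hμI (fun b _ hb => by simp [if_neg hb])]
    simp
  have hβμneg : β ≠ -μ := by
    intro h
    rw [h, inner_neg_left] at hβμ
    linarith
  have hcpβμ : cpair β μ = 1 := by
    have hpos : 0 < cpair β μ := div_pos (by linarith) hmm
    rcases P.cpair_vals hSL hβroot hμroot hβμne hβμneg with h | h | h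
    · linarith
    · linarith
    · exact h
  have hβ'root : β - μ ∈ P.roots := by
    have := P.reflect_mem μ hμroot β hβroot
    rwa [reflVec_apply', hcpβμ, one_smul] at this
  -- real coefficients of β - μ
  set f : V → ℝ := fun δ => (c δ : ℝ) - if δ = μ then 1 else 0 with hf_def
  have hfcomb : β - μ = ∑ δ ∈ P.simples, f δ • δ := by
    have h1 : ∑ δ ∈ P.simples, f δ • δ
        = ∑ δ ∈ P.simples, (c δ : ℝ) • δ - ∑ δ ∈ P.simples, (if δ = μ then (1:ℝ) else 0) • δ := by
      rw [← Finset.sum_sub_distrib]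
      exact Finset.sum_congr rfl fun δ _ => by rw [hf_def]; rw [sub_smul]
    have h2 : ∑ δ ∈ P.simples, (if δ = μ then (1:ℝ) else 0) • δ = μ := by
      rw [Finset.sum_eq_single_of_mem μ hμS (fun b _ hb => by simp [if_neg hb])]
      simp
    rw [h1, h2, hc]
  have hfα : 0 < f α := by
    rw [hf_def]
    simp only [if_neg (Ne.symm hμα), hcα]
    norm_num
  obtain ⟨d, hd, hdf⟩ := P.pos_comb_of_root' hβ'root f hfcomb ⟨α, hα, hfα⟩
  have hdα : d α ≠ 0 := by
    have h1 := hdf α hα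
    rw [hf_def] at h1
    simp only [if_neg (Ne.symm hμα), hcα] at h1
    intro h
    rw [h] at h1
    push_cast at h1
    linarith
  have hβ'not : β - μ ∉ P.PosOf (P.simples.erase α) := P.not_posOf hα d hd hdα
  have hβ'pos : β - μ ∈ P.Pos := ⟨hβ'root, d, hd⟩
  -- height decreases
  have hdμ : d μ + 1 = c μ := by
    have h1 := hdf μ hμS
    rw [hf_def] at h1
    simp at h1
    have h2 : (d μ : ℝ) + 1 = (c μ : ℝ) := by linarith
    exact_mod_cast h2
  have hdrest : ∀ δ ∈ P.simples.erase μ, d δ = c δ := by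
    intro δ hδ
    obtain ⟨hδμ, hδS⟩ := Finset.mem_erase.mp hδ
    have h1 := hdf δ hδS
    rw [hf_def] at h1
    simp only [if_neg hδμ] at h1
    exact_mod_cast (by linarith : (d δ : ℝ) = (c δ : ℝ))
  have hsum_d : ∑ δ ∈ P.simples, d δ = ∑ δ ∈ P.simples.erase μ, c δ + d μ := by
    rw [← Finset.sum_erase_add _ d hμS]
    exact congrArg (· + d μ) (Finset.sum_congr rfl hdrest)
  have hsum_c : ∑ δ ∈ P.simples, c δ = ∑ δ ∈ P.simples.erase μ, c δ + c μ :=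
    (Finset.sum_erase_add _ c hμS).symm
  have hht : ∑ δ ∈ P.simples, d δ + 1 = n := by omega
  obtain ⟨u, hu, huβ'⟩ := IH (∑ δ ∈ P.simples, d δ) (by omega) (β - μ) hβ'pos hβ'not d hd rfl
  refine ⟨u * reflVec μ, mul_mem hu (Subgroup.subset_closure ⟨μ, hμI, rfl⟩), ?_⟩
  show u (reflVec μ β) = α
  rw [reflVec_apply', hcpβμ, one_smul, huβ']

end RootSystemData

end Aux

/-- If `ϖ_α` is minuscule and `I = S \ {α}`, then the parabolic Weyl
group `W_I` acts transitively on `R⁺ \ R⁺_I`. -/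
theorem WeylOf_transitive_on_complement [DecidableEq V] (P : RootSystemData V)
    (hSL : P.SimplyLaced) (hirr : P.Irred)
    (α : V) (hα : α ∈ P.simples) (ϖ : V)
    (hfw : P.IsFundamentalWeight α ϖ) (hminu : P.IsMinusculeWeight ϖ) :
    ∀ β ∈ P.Pos, β ∉ P.PosOf (P.simples.erase α) →
    ∀ γ ∈ P.Pos, γ ∉ P.PosOf (P.simples.erase α) →
    ∃ u ∈ P.WeylOf (P.simples.erase α), u β = γ := by
  intro β hβpos hβnot γ hγpos hγnot
  obtain ⟨cβ, hcβ⟩ := hβpos.2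
  obtain ⟨cγ, hcγ⟩ := hγpos.2
  obtain ⟨u, hu, huβ⟩ := P.to_alpha hSL α hα ϖ hfw hminu _ β hβpos hβnot cβ hcβ rfl
  obtain ⟨v, hv, hvγ⟩ := P.to_alpha hSL α hα ϖ hfw hminu _ γ hγpos hγnot cγ hcγ rfl
  refine ⟨v⁻¹ * u, mul_mem (inv_mem hv) hu, ?_⟩
  show v.symm (u β) = γ
  rw [huβ, ← hvγ]
  exact v.symm_apply_apply γ
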